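/- Let k ≥ 1, let Λ be a k-graph, let λ be a morphism of Λ with v = r(λ), and suppose the set {w : w a vertex with vΛw ≠ ∅} is finite of cardinality t₀ and |d(λ)| ≥ t₀. Then there exist m, n ∈ ℕ^k with m ≤ n ≤ d(λ) and m ≠ n such that the unique initial segments of λ of degrees m and n have the same source; consequently there exist a vertex w with vΛw ≠ ∅ and a cycle γ with s(γ) = r(γ) = w and d(γ) = n − m ≠ 0. -/

import Mathlib

open CategoryTheory

/-- A `k`-graph structure on a category `Λ`: a degree map `d` (with values in `ℕ^k`)
satisfying `d(𝟙 v) = 0`, additivity on composites, and the unique factorization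
property. Here a morphism `f : a ⟶ b` has source `a` and range `b`, and in the
factorization `f = ν ≫ μ` the factor `μ : c ⟶ b` is the initial segment of degree `m`. -/
structure IsKGraph {k : ℕ} (Λ : Type*) [Category Λ]
    (d : ∀ {a b : Λ}, (a ⟶ b) → (Fin k → ℕ)) : Prop where
  d_id : ∀ v : Λ, d (𝟙 v) = 0
  d_comp : ∀ {a b c : Λ} (f : a ⟶ b) (g : b ⟶ c), d (f ≫ g) = d f + d g
  uniqueFactorization : ∀ {a b : Λ} (f : a ⟶ b) (m : Fin k → ℕ), m ≤ d f →
    ∃! p : Σ c : Λ, (a ⟶ c) × (c ⟶ b), d p.2.2 = m ∧ p.2.1 ≫ p.2.2 = f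

/-- Let `Λ` be a `k`-graph (`k ≥ 1`), `f : u ⟶ v` a morphism with range
`v`, and suppose `{w | vΛw ≠ ∅}` is finite of cardinality `t₀` with `|d f| ≥ t₀`. Then
there are `m ≤ n ≤ d f` with `m ≠ n` whose initial segments of `f` have the same source
`w`; consequently `vΛw ≠ ∅` and there is a cycle `γ : w ⟶ w` with `d γ = n - m ≠ 0`. -/
theorem exists_cycle_of_long_path {k : ℕ} (hk : 1 ≤ k) {Λ : Type*} [Category Λ]
    (d : ∀ {a b : Λ}, (a ⟶ b) → (Fin k → ℕ)) (hΛ : IsKGraph Λ @d)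
    {u v : Λ} (f : u ⟶ v) (t₀ : ℕ)
    (hfin : {w : Λ | Nonempty (w ⟶ v)}.Finite)
    (hcard : {w : Λ | Nonempty (w ⟶ v)}.ncard = t₀)
    (hlen : t₀ ≤ ∑ i, d f i) :
    ∃ m n : Fin k → ℕ, m ≤ n ∧ n ≤ d f ∧ m ≠ n ∧
      ∃ (w : Λ) (νm : u ⟶ w) (μm : w ⟶ v) (νn : u ⟶ w) (μn : w ⟶ v),
        d μm = m ∧ νm ≫ μm = f ∧ d μn = n ∧ νn ≫ μn = f ∧
        Nonempty (w ⟶ v) ∧ ∃ γ : w ⟶ w, d γ = n - m ∧ n - m ≠ 0 := by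
  classical
  set a : ℕ → ℕ := fun i => if h : i < k then d f ⟨i, h⟩ else 0 with ha
  set S : ℕ → ℕ := fun i => ∑ i' ∈ Finset.range i, a i' with hS
  have hSk : S k = ∑ i, d f i := by
    show ∑ i' ∈ Finset.range k, a i' = _
    rw [← Fin.sum_univ_eq_sum_range]
    exact Finset.sum_congr rfl fun i _ => by simp [ha, i.isLt]
  set M : ℕ → (Fin k → ℕ) := fun j i => min (d f i) (j - S i.val) with hM
  have hMle : ∀ j, M j ≤ d f := fun j i => min_le_left _ _
  have hMmono : ∀ j j', j ≤ j' → M j ≤ M j' := by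
    intro j j' h i; simp only [hM]; omega
  have hsum : ∀ n j, ∑ i ∈ Finset.range n, min (a i) (j - S i) = min j (S n) := by
    intro n j
    induction n with
    | zero => simp [hS]
    | succ n ih =>
      rw [Finset.sum_range_succ, ih]
      have : S (n + 1) = S n + a n := Finset.sum_range_succ a n
      omega
  have hMsum : ∀ j, ∑ i, M j i = min j (∑ i, d f i) := by
    intro j
    have h1 : ∑ i, M j i = ∑ i ∈ Finset.range k, min (a i) (j - S i) := by
      rw [← Fin.sum_univ_eq_sum_range (fun x => min (a x) (j - S x)) k]
      exact Finset.sum_congr rfl fun i _ => by simp [hM, ha, i.isLt]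
    rw [h1, hsum k j, hSk]
  -- initial segments
  have hfac := fun j => hΛ.uniqueFactorization f (M j) (hMle j)
  set P : ℕ → Σ c : Λ, (u ⟶ c) × (c ⟶ v) := fun j => (hfac j).choose with hP
  have hPspec : ∀ j, d (P j).2.2 = M j ∧ (P j).2.1 ≫ (P j).2.2 = f :=
    fun j => (hfac j).choose_spec.1
  -- pigeonhole
  have hmaps : ∀ j ∈ Finset.range (t₀ + 1), (P j).1 ∈ hfin.toFinset := by
    intro j _
    simp only [Set.Finite.mem_toFinset, Set.mem_setOf_eq]
    exact ⟨(P j).2.2⟩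
  have hcard' : hfin.toFinset.card < (Finset.range (t₀ + 1)).card := by
    rw [Finset.card_range, ← hcard, Set.ncard_eq_toFinset_card _ hfin]
    omega
  obtain ⟨x, hx, y, hy, hxy, hPxy⟩ :=
    Finset.exists_ne_map_eq_of_card_lt_of_maps_to hcard' hmaps
  -- wlog x < y
  wlog hlt : x < y generalizing x y
  · exact this y hy x hx hxy.symm hPxy.symm (by omega)
  simp only [Finset.mem_range] at hx hy
  set m := M x with hm
  set n := M y with hn
  have hsx : ∑ i, m i = x := by rw [hm, hMsum]; omega
  have hsy : ∑ i, n i = y := by rw [hn, hMsum]; omega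
  have hmn : m ≤ n := hMmono x y (le_of_lt hlt)
  have hmne : m ≠ n := fun h => by rw [h, hsy] at hsx; omega
  have hd0 : ∀ {c c' : Λ} (h : c = c'), d (eqToHom h) = 0 := by
    intro c c' h; cases h; simpa using hΛ.d_id c
  set w := (P y).1 with hw
  have hwx : (P x).1 = w := hPxy
  -- rename
  obtain ⟨hdx, hcx⟩ := hPspec x
  obtain ⟨hdy, hcy⟩ := hPspec y
  set νn : u ⟶ w := (P y).2.1
  set μn : w ⟶ v := (P y).2.2
  set νm : u ⟶ w := (P x).2.1 ≫ eqToHom hwx with hνm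
  set μm : w ⟶ v := eqToHom hwx.symm ≫ (P x).2.2 with hμm
  have hdμm : d μm = m := by
    rw [hμm, hΛ.d_comp]
    rw [hd0, hdx]; simp [hm]
  have hcμm : νm ≫ μm = f := by
    rw [hνm, hμm, Category.assoc, eqToHom_trans_assoc, eqToHom_refl, Category.id_comp, hcx]
  -- factor μn at degree m
  have hmlen : m ≤ d μn := by rw [hdy]; exact hmn
  obtain ⟨q, ⟨hq1, hq2⟩, _⟩ := hΛ.uniqueFactorization μn m hmlen
  -- uniqueness of factorization of f at degree m
  have huniq := hΛ.uniqueFactorization f m (le_trans hmn (hMle y))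
  have h1 : (⟨q.1, νn ≫ q.2.1, q.2.2⟩ : Σ c : Λ, (u ⟶ c) × (c ⟶ v)) = ⟨w, νm, μm⟩ := by
    have e1 := huniq.unique (y₁ := ⟨q.1, νn ≫ q.2.1, q.2.2⟩) (y₂ := ⟨w, νm, μm⟩)
      ⟨hq1, by rw [Category.assoc, hq2, hcy]⟩ ⟨hdμm, hcμm⟩
    exact e1
  have hq1w : q.1 = w := congrArg Sigma.fst h1
  set γ : w ⟶ w := q.2.1 ≫ eqToHom hq1w with hγ
  have hdγ : d γ = n - m := by
    have hd0 : ∀ {c c' : Λ} (h : c = c'), d (eqToHom h) = 0 := by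
      intro c c' h; cases h; simpa using hΛ.d_id c
    have : d μn = d q.2.1 + m := by rw [← hq2, hΛ.d_comp, hq1]
    have hdq : d q.2.1 = n - m := by
      funext i
      have e1 : d μn i = d q.2.1 i + m i := congrFun this i
      have e2 : d μn i = n i := congrFun hdy i
      show d q.2.1 i = n i - m i
      omega
    rw [hγ, hΛ.d_comp, hd0, hdq]
    simp
  refine ⟨m, n, hmn, hMle y, hmne, w, νm, μm, νn, μn, hdμm, hcμm, hdy, hcy,
    ⟨μn⟩, γ, hdγ, ?_⟩
  intro h
  apply hmne
  funext i
  have h1 : n i - m i = 0 := congrFun h i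
  exact Nat.le_antisymm (hmn i) (Nat.le_of_sub_eq_zero h1)
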